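/- arXiv:2304.00264 — 8 statements merged into one kernel-verified Lean document; each statement's English description precedes it below -/
import Mathlib

section
/- The vorticity ω_ε = -(1-ε²)/(cosh y + ε cos x)² satisfies ω_ε = -((ξ_ε - ε)²/(1-ε²) + η_ε²), where ξ_ε = (ε cosh y + cos x)/(cosh y + ε cos x) and η_ε = √(1-ε²) sin x/(cosh y + ε cos x). -/
/-- The vorticity `ω_ε = -(1-ε²)/(cosh y + ε cos x)²` satisfies
`ω_ε = -((ξ_ε - ε)²/(1-ε²) + η_ε²)` where `ξ_ε = (ε cosh y + cos x)/(cosh y + ε cos x)` and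
`η_ε = √(1-ε²) sin x/(cosh y + ε cos x)`. -/
theorem stmt3 (ε : ℝ) (hε : ε ∈ Set.Ico (0 : ℝ) 1) (x y : ℝ) :
    -((1 - ε ^ 2) / (Real.cosh y + ε * Real.cos x) ^ 2)
      = -(((ε * Real.cosh y + Real.cos x) / (Real.cosh y + ε * Real.cos x) - ε) ^ 2 / (1 - ε ^ 2)
          + (Real.sqrt (1 - ε ^ 2) * Real.sin x / (Real.cosh y + ε * Real.cos x)) ^ 2) := by
  obtain ⟨hε0, hε1⟩ := hε
  have hD : Real.cosh y + ε * Real.cos x > 0 := by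
    have h1 : (1:ℝ) ≤ Real.cosh y := Real.one_le_cosh y
    nlinarith [Real.neg_one_le_cos x, Real.cos_le_one x]
  have h1 : (1:ℝ) - ε ^ 2 > 0 := by nlinarith
  have hsq : Real.sqrt (1 - ε ^ 2) ^ 2 = 1 - ε ^ 2 := Real.sq_sqrt h1.le
  have hsin : Real.sin x ^ 2 = 1 - Real.cos x ^ 2 := Real.sin_sq x
  field_simp
  rw [hsq, hsin]; ring
end

section
/- Each of η_ε, γ_ε, ξ_ε is an eigenfunction of -Δ with weight g'(ψ_ε): namely -Δη_ε = g'(ψ_ε) η_ε, -Δγ_ε = g'(ψ_ε) γ_ε, and -Δξ_ε = g'(ψ_ε) ξ_ε, where g'(ψ_ε) = 2(1-ε²)/(cosh y + ε cos x)². -/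
noncomputable section

/-- The denominator `cosh y + ε cos x`. -/
def KSden (ε x y : ℝ) : ℝ := Real.cosh y + ε * Real.cos x

/-- The weight `g'(ψ_ε) = 2e^{-2ψ_ε} = 2(1-ε²)/(cosh y + ε cos x)²`. -/
def KSgp (ε x y : ℝ) : ℝ := 2 * (1 - ε ^ 2) / (KSden ε x y) ^ 2

/-- `η_ε = √(1-ε²) sin x/(cosh y + ε cos x)`. -/
def KSeta (ε x y : ℝ) : ℝ := Real.sqrt (1 - ε ^ 2) * Real.sin x / KSden ε x y

/-- `γ_ε = √(1-ε²) sinh y/(cosh y + ε cos x)`. -/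
def KSgam (ε x y : ℝ) : ℝ := Real.sqrt (1 - ε ^ 2) * Real.sinh y / KSden ε x y

/-- `ξ_ε = (ε cosh y + cos x)/(cosh y + ε cos x)`. -/
def KSxi (ε x y : ℝ) : ℝ := (ε * Real.cosh y + Real.cos x) / KSden ε x y

/-- Partial derivative in the first variable. -/
def pdx (f : ℝ → ℝ → ℝ) (x y : ℝ) : ℝ := deriv (fun t => f t y) x

/-- Partial derivative in the second variable. -/
def pdy (f : ℝ → ℝ → ℝ) (x y : ℝ) : ℝ := deriv (fun t => f x t) y

/-- The Laplacian `Δf = ∂²f/∂x² + ∂²f/∂y²`. -/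
def KSlap (f : ℝ → ℝ → ℝ) (x y : ℝ) : ℝ := pdx (pdx f) x y + pdy (pdy f) x y

end

lemma deriv2_div (N D N' N'' D' D'' : ℝ → ℝ)
    (hN : ∀ t, HasDerivAt N (N' t) t) (hN' : ∀ t, HasDerivAt N' (N'' t) t)
    (hD : ∀ t, HasDerivAt D (D' t) t) (hD' : ∀ t, HasDerivAt D' (D'' t) t)
    (hD0 : ∀ t, D t ≠ 0) (x : ℝ) :
    deriv (deriv (fun t => N t / D t)) x =
      ((N'' x * D x - N x * D'' x) * D x - 2 * D' x * (N' x * D x - N x * D' x)) / D x ^ 3 := by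
  have h1 : deriv (fun t => N t / D t) = fun t => (N' t * D t - N t * D' t) / D t ^ 2 :=
    funext fun t => ((hN t).div (hD t) (hD0 t)).deriv
  rw [h1]
  have h2 := ((((hN' x).mul (hD x)).sub ((hN x).mul (hD' x))).div
    ((hD x).pow 2) (pow_ne_zero 2 (hD0 x)))
  rw [show (fun t => (N' t * D t - N t * D' t) / D t ^ 2) = (N' * D - N * D') / D ^ 2 from rfl, h2.deriv]
  simp only [Pi.mul_apply, Pi.sub_apply, Pi.pow_apply]
  push_cast
  field_simp [hD0 x]
  ring

/-- Each of `η_ε, γ_ε, ξ_ε` is an eigenfunction of `-Δ` with weight `g'(ψ_ε)`: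
`-Δη_ε = g'(ψ_ε) η_ε`, `-Δγ_ε = g'(ψ_ε) γ_ε`, `-Δξ_ε = g'(ψ_ε) ξ_ε`. -/
theorem stmt4 (ε : ℝ) (hε : ε ∈ Set.Ico (0 : ℝ) 1) (x y : ℝ) :
    -KSlap (KSeta ε) x y = KSgp ε x y * KSeta ε x y ∧
    -KSlap (KSgam ε) x y = KSgp ε x y * KSgam ε x y ∧
    -KSlap (KSxi ε) x y = KSgp ε x y * KSxi ε x y := by
  obtain ⟨hε0, hε1⟩ := hε
  have dpos : ∀ a b : ℝ, 0 < Real.cosh b + ε * Real.cos a := by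
    intro a b
    nlinarith [Real.one_le_cosh b, Real.neg_one_le_cos a, Real.cos_le_one a,
      mul_le_mul_of_nonneg_left (Real.neg_one_le_cos a) hε0]
  set s : ℝ := Real.sqrt (1 - ε ^ 2) with hs
  set S : ℝ := Real.sin x
  set C : ℝ := Real.cos x
  set Sh : ℝ := Real.sinh y
  set Ch : ℝ := Real.cosh y
  set d : ℝ := Real.cosh y + ε * Real.cos x with hd
  have hd0 : d ≠ 0 := (dpos x y).ne'
  have h1 : S ^ 2 + C ^ 2 = 1 := Real.sin_sq_add_cos_sq x
  have h2 : Ch ^ 2 - Sh ^ 2 = 1 := Real.cosh_sq_sub_sinh_sq y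
  -- x-direction denominators
  have hDx : ∀ t, HasDerivAt (fun t => Real.cosh y + ε * Real.cos t) (ε * -Real.sin t) t :=
    fun t => ((Real.hasDerivAt_cos t).const_mul ε).const_add _
  have hDx' : ∀ t, HasDerivAt (fun t => ε * -Real.sin t) (ε * -Real.cos t) t :=
    fun t => (Real.hasDerivAt_sin t).neg.const_mul ε
  have hDx0 : ∀ t : ℝ, Real.cosh y + ε * Real.cos t ≠ 0 := fun t => (dpos t y).ne'
  -- y-direction denominators
  have hDy : ∀ t, HasDerivAt (fun t => Real.cosh t + ε * Real.cos x) (Real.sinh t) t :=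
    fun t => (Real.hasDerivAt_cosh t).add_const _
  have hDy' : ∀ t, HasDerivAt Real.sinh (Real.cosh t) t := Real.hasDerivAt_sinh
  have hDy0 : ∀ t : ℝ, Real.cosh t + ε * Real.cos x ≠ 0 := fun t => (dpos x t).ne'
  refine ⟨?_, ?_, ?_⟩
  · -- η
    have Hxx : pdx (pdx (KSeta ε)) x y = s * S * (3 * ε * C * d + 2 * ε ^ 2 * S ^ 2 - d ^ 2) / d ^ 3 :=
      (deriv2_div (fun t => s * Real.sin t) (fun t => Real.cosh y + ε * Real.cos t)
        (fun t => s * Real.cos t) (fun t => s * -Real.sin t) _ _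
        (fun t => (Real.hasDerivAt_sin t).const_mul s)
        (fun t => (Real.hasDerivAt_cos t).const_mul s) hDx hDx' hDx0 x).trans (by ring)
    have Hyy : pdy (pdy (KSeta ε)) x y = s * S * (2 * Sh ^ 2 - Ch * d) / d ^ 3 :=
      (deriv2_div (fun _ => s * S) (fun t => Real.cosh t + ε * Real.cos x)
        (fun _ => 0) (fun _ => 0) _ _
        (fun t => hasDerivAt_const t _) (fun t => hasDerivAt_const t _)
        hDy hDy' hDy0 y).trans (by ring)
    show -(pdx (pdx (KSeta ε)) x y + pdy (pdy (KSeta ε)) x y) = _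
    rw [Hxx, Hyy]
    simp only [KSgp, KSeta, KSden, ← hs, ← hd]
    rw [← add_div, div_mul_div_comm, ← neg_div,
      show d ^ 2 * d = d ^ 3 from by ring]
    rw [show -(s * S * (3 * ε * C * d + 2 * ε ^ 2 * S ^ 2 - d ^ 2) + s * S * (2 * Sh ^ 2 - Ch * d))
        = 2 * (1 - ε ^ 2) * (s * S) from by
      rw [hd]; linear_combination (-2 * ε ^ 2 * s * S) * h1 + (2 * s * S) * h2]
  · -- γ
    have Hxx : pdx (pdx (KSgam ε)) x y = s * Sh * (ε * C * d + 2 * ε ^ 2 * S ^ 2) / d ^ 3 :=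
      (deriv2_div (fun _ => s * Sh) (fun t => Real.cosh y + ε * Real.cos t)
        (fun _ => 0) (fun _ => 0) _ _
        (fun t => hasDerivAt_const t _) (fun t => hasDerivAt_const t _)
        hDx hDx' hDx0 x).trans (by ring)
    have Hyy : pdy (pdy (KSgam ε)) x y = s * Sh * (d ^ 2 - 3 * Ch * d + 2 * Sh ^ 2) / d ^ 3 :=
      (deriv2_div (fun t => s * Real.sinh t) (fun t => Real.cosh t + ε * Real.cos x)
        (fun t => s * Real.cosh t) (fun t => s * Real.sinh t) _ _
        (fun t => (Real.hasDerivAt_sinh t).const_mul s)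
        (fun t => (Real.hasDerivAt_cosh t).const_mul s) hDy hDy' hDy0 y).trans (by ring)
    show -(pdx (pdx (KSgam ε)) x y + pdy (pdy (KSgam ε)) x y) = _
    rw [Hxx, Hyy]
    simp only [KSgp, KSgam, KSden, ← hs, ← hd]
    rw [← add_div, div_mul_div_comm, ← neg_div,
      show d ^ 2 * d = d ^ 3 from by ring]
    rw [show -(s * Sh * (ε * C * d + 2 * ε ^ 2 * S ^ 2) + s * Sh * (d ^ 2 - 3 * Ch * d + 2 * Sh ^ 2))
        = 2 * (1 - ε ^ 2) * (s * Sh) from by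
      rw [hd]; linear_combination (-2 * ε ^ 2 * s * Sh) * h1 + (2 * s * Sh) * h2]
  · -- ξ
    have Hxx : pdx (pdx (KSxi ε)) x y =
        (-C * d ^ 2 + ε * C * (ε * Ch + C) * d - 2 * ε * S ^ 2 * d + 2 * ε ^ 2 * S ^ 2 * (ε * Ch + C)) / d ^ 3 :=
      (deriv2_div (fun t => ε * Real.cosh y + Real.cos t) (fun t => Real.cosh y + ε * Real.cos t)
        (fun t => -Real.sin t) (fun t => -Real.cos t) _ _
        (fun t => (Real.hasDerivAt_cos t).const_add _)
        (fun t => (Real.hasDerivAt_sin t).neg) hDx hDx' hDx0 x).trans (by ring)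
    have Hyy : pdy (pdy (KSxi ε)) x y =
        (ε * Ch * d ^ 2 - (ε * Ch + C) * Ch * d - 2 * ε * Sh ^ 2 * d + 2 * Sh ^ 2 * (ε * Ch + C)) / d ^ 3 :=
      (deriv2_div (fun t => ε * Real.cosh t + Real.cos x) (fun t => Real.cosh t + ε * Real.cos x)
        (fun t => ε * Real.sinh t) (fun t => ε * Real.cosh t) _ _
        (fun t => ((Real.hasDerivAt_cosh t).const_mul ε).add_const _)
        (fun t => (Real.hasDerivAt_sinh t).const_mul ε) hDy hDy' hDy0 y).trans (by ring)
    show -(pdx (pdx (KSxi ε)) x y + pdy (pdy (KSxi ε)) x y) = _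
    rw [Hxx, Hyy]
    simp only [KSgp, KSxi, KSden, ← hd]
    rw [← add_div, div_mul_div_comm, ← neg_div,
      show d ^ 2 * d = d ^ 3 from by ring]
    rw [show -((-C * d ^ 2 + ε * C * (ε * Ch + C) * d - 2 * ε * S ^ 2 * d + 2 * ε ^ 2 * S ^ 2 * (ε * Ch + C)) +
          (ε * Ch * d ^ 2 - (ε * Ch + C) * Ch * d - 2 * ε * Sh ^ 2 * d + 2 * Sh ^ 2 * (ε * Ch + C)))
        = 2 * (1 - ε ^ 2) * (ε * Ch + C) from by
      rw [hd]; linear_combination (2 * ε * d - 2 * ε ^ 2 * (ε * Ch + C)) * h1 + (-2 * ε * d + 2 * (ε * Ch + C)) * h2]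
end

section
/- The gradients of η_ε, γ_ε, ξ_ε satisfy: ∇η_ε · ∇γ_ε = -½ g'(ψ_ε) η_ε γ_ε, ∇γ_ε · ∇ξ_ε = -½ g'(ψ_ε) γ_ε ξ_ε, ∇ξ_ε · ∇η_ε = -½ g'(ψ_ε) ξ_ε η_ε, and |∇η_ε|² = ½ g'(ψ_ε)(1 - η_ε²), |∇γ_ε|² = ½ g'(ψ_ε)(1 - γ_ε²), |∇ξ_ε|² = ½ g'(ψ_ε)(1 - ξ_ε²). -/
set_option maxHeartbeats 1000000


lemma ks_den_pos {ε : ℝ} (hε : ε ∈ Set.Ico (0:ℝ) 1) (x y : ℝ) : 0 < KSden ε x y := by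
  unfold KSden
  nlinarith [Real.neg_one_le_cos x, Real.cos_le_one x, hε.1, hε.2, Real.one_le_cosh y]

lemma ks_pdx_eta {ε : ℝ} (hε : ε ∈ Set.Ico (0:ℝ) 1) (x y : ℝ) :
    pdx (KSeta ε) x y
      = Real.sqrt (1-ε^2) * (Real.cos x * Real.cosh y + ε) / (KSden ε x y)^2 := by
  have hD := (ks_den_pos hε x y).ne'
  have h1 : HasDerivAt (fun t => Real.sqrt (1-ε^2) * Real.sin t)
      (Real.sqrt (1-ε^2) * Real.cos x) x := (Real.hasDerivAt_sin x).const_mul _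
  have h2 : HasDerivAt (fun t => KSden ε t y) (ε * -Real.sin x) x := by
    unfold KSden; exact ((Real.hasDerivAt_cos x).const_mul ε).const_add _
  have h := (h1.div h2 hD).deriv
  unfold pdx KSeta
  erw [h]
  unfold KSden at hD ⊢
  field_simp
  linear_combination (Real.sqrt (1-ε^2)) * ε * (Real.sin_sq_add_cos_sq x)

lemma ks_pdy_eta {ε : ℝ} (hε : ε ∈ Set.Ico (0:ℝ) 1) (x y : ℝ) :
    pdy (KSeta ε) x y
      = -(Real.sqrt (1-ε^2) * Real.sin x * Real.sinh y) / (KSden ε x y)^2 := by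
  have hD := (ks_den_pos hε x y).ne'
  have h1 : HasDerivAt (fun _ : ℝ => Real.sqrt (1-ε^2) * Real.sin x) 0 y :=
    hasDerivAt_const _ _
  have h2 : HasDerivAt (fun t => KSden ε x t) (Real.sinh y) y := by
    unfold KSden; exact (Real.hasDerivAt_cosh y).add_const _
  have h := (h1.div h2 hD).deriv
  unfold pdy KSeta
  erw [h]
  unfold KSden at hD ⊢
  field_simp
  ring

lemma ks_pdx_gam {ε : ℝ} (hε : ε ∈ Set.Ico (0:ℝ) 1) (x y : ℝ) :
    pdx (KSgam ε) x y
      = Real.sqrt (1-ε^2) * ε * Real.sin x * Real.sinh y / (KSden ε x y)^2 := by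
  have hD := (ks_den_pos hε x y).ne'
  have h1 : HasDerivAt (fun _ : ℝ => Real.sqrt (1-ε^2) * Real.sinh y) 0 x :=
    hasDerivAt_const _ _
  have h2 : HasDerivAt (fun t => KSden ε t y) (ε * -Real.sin x) x := by
    unfold KSden; exact ((Real.hasDerivAt_cos x).const_mul ε).const_add _
  have h := (h1.div h2 hD).deriv
  unfold pdx KSgam
  erw [h]
  unfold KSden at hD ⊢
  field_simp
  ring

lemma ks_pdy_gam {ε : ℝ} (hε : ε ∈ Set.Ico (0:ℝ) 1) (x y : ℝ) :
    pdy (KSgam ε) x y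
      = Real.sqrt (1-ε^2) * (1 + ε * Real.cos x * Real.cosh y) / (KSden ε x y)^2 := by
  have hD := (ks_den_pos hε x y).ne'
  have h1 : HasDerivAt (fun t => Real.sqrt (1-ε^2) * Real.sinh t)
      (Real.sqrt (1-ε^2) * Real.cosh y) y := (Real.hasDerivAt_sinh y).const_mul _
  have h2 : HasDerivAt (fun t => KSden ε x t) (Real.sinh y) y := by
    unfold KSden; exact (Real.hasDerivAt_cosh y).add_const _
  have h := (h1.div h2 hD).deriv
  unfold pdy KSgam
  erw [h]
  unfold KSden at hD ⊢
  field_simp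
  linear_combination (Real.sqrt (1-ε^2)) * (Real.cosh_sq_sub_sinh_sq y)

lemma ks_pdx_xi {ε : ℝ} (hε : ε ∈ Set.Ico (0:ℝ) 1) (x y : ℝ) :
    pdx (KSxi ε) x y
      = (ε^2 - 1) * Real.sin x * Real.cosh y / (KSden ε x y)^2 := by
  have hD := (ks_den_pos hε x y).ne'
  have h1 : HasDerivAt (fun t => ε * Real.cosh y + Real.cos t) (-Real.sin x) x :=
    (Real.hasDerivAt_cos x).const_add _
  have h2 : HasDerivAt (fun t => KSden ε t y) (ε * -Real.sin x) x := by
    unfold KSden; exact ((Real.hasDerivAt_cos x).const_mul ε).const_add _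
  have h := (h1.div h2 hD).deriv
  unfold pdx KSxi
  erw [h]
  unfold KSden at hD ⊢
  field_simp
  ring

lemma ks_pdy_xi {ε : ℝ} (hε : ε ∈ Set.Ico (0:ℝ) 1) (x y : ℝ) :
    pdy (KSxi ε) x y
      = (ε^2 - 1) * Real.sinh y * Real.cos x / (KSden ε x y)^2 := by
  have hD := (ks_den_pos hε x y).ne'
  have h1 : HasDerivAt (fun t => ε * Real.cosh t + Real.cos x) (ε * Real.sinh y) y :=
    ((Real.hasDerivAt_cosh y).const_mul ε).add_const _
  have h2 : HasDerivAt (fun t => KSden ε x t) (Real.sinh y) y := by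
    unfold KSden; exact (Real.hasDerivAt_cosh y).add_const _
  have h := (h1.div h2 hD).deriv
  unfold pdy KSxi
  erw [h]
  unfold KSden at hD ⊢
  field_simp
  ring

/-- Gradient identities for `η_ε, γ_ε, ξ_ε`: the mixed dot products equal
`-½ g'(ψ_ε)` times the products, and the squared gradients equal
`½ g'(ψ_ε)(1 - (·)²)`. -/
theorem stmt5 (ε : ℝ) (hε : ε ∈ Set.Ico (0 : ℝ) 1) (x y : ℝ) :
    (pdx (KSeta ε) x y * pdx (KSgam ε) x y + pdy (KSeta ε) x y * pdy (KSgam ε) x y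
      = -(1/2) * KSgp ε x y * (KSeta ε x y * KSgam ε x y)) ∧
    (pdx (KSgam ε) x y * pdx (KSxi ε) x y + pdy (KSgam ε) x y * pdy (KSxi ε) x y
      = -(1/2) * KSgp ε x y * (KSgam ε x y * KSxi ε x y)) ∧
    (pdx (KSxi ε) x y * pdx (KSeta ε) x y + pdy (KSxi ε) x y * pdy (KSeta ε) x y
      = -(1/2) * KSgp ε x y * (KSxi ε x y * KSeta ε x y)) ∧
    ((pdx (KSeta ε) x y) ^ 2 + (pdy (KSeta ε) x y) ^ 2
      = (1/2) * KSgp ε x y * (1 - (KSeta ε x y) ^ 2)) ∧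
    ((pdx (KSgam ε) x y) ^ 2 + (pdy (KSgam ε) x y) ^ 2
      = (1/2) * KSgp ε x y * (1 - (KSgam ε x y) ^ 2)) ∧
    ((pdx (KSxi ε) x y) ^ 2 + (pdy (KSxi ε) x y) ^ 2
      = (1/2) * KSgp ε x y * (1 - (KSxi ε x y) ^ 2)) := by
  have hD := (ks_den_pos hε x y).ne'
  have hq : Real.sqrt (1 - ε^2) ^ 2 = 1 - ε^2 :=
    Real.sq_sqrt (by nlinarith [hε.1, hε.2] : (0:ℝ) ≤ 1 - ε^2)
  have hsc := Real.sin_sq_add_cos_sq x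
  have hch := Real.cosh_sq_sub_sinh_sq y
  rw [ks_pdx_eta hε, ks_pdy_eta hε, ks_pdx_gam hε, ks_pdy_gam hε, ks_pdx_xi hε,
    ks_pdy_xi hε]
  unfold KSgp KSeta KSgam KSxi
  have hd : KSden ε x y = Real.cosh y + ε * Real.cos x := rfl
  set d := KSden ε x y
  refine ⟨?_, ?_, ?_, ?_, ?_, ?_⟩
  · ring
  · linear_combination (Real.sqrt (1-ε^2) * (ε^2-1) * Real.sinh y * ε * Real.cosh y
      / d^4) * hsc
  · linear_combination (Real.sqrt (1-ε^2) * (ε^2-1) * Real.sin x * Real.cos x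
      / d^4) * hch
  · field_simp
    rw [hq, hd]
    linear_combination
      ((1-ε^2) * (Real.cosh y^2 - ε^2)) * hsc
      + (-(1-ε^2) * Real.sin x^2) * hch
  · field_simp
    rw [hq, hd]
    linear_combination
      ((1-ε^2) * ε^2 * Real.sinh y^2) * hsc
      + ((1-ε^2) * (ε^2 * Real.cos x^2 - 1)) * hch
  · field_simp
    rw [hd]
    linear_combination
      ((1-ε^2)^2 * Real.cosh y^2) * hsc
      + (-(1-ε^2)^2 * Real.cos x^2) * hch
end

section
/- The Jacobian of the change of variables (x,y) ↦ (θ_ε, γ_ε) equals ½ g'(ψ_ε), i.e. ∂_x θ_ε · ∂_y γ_ε − ∂_y θ_ε · ∂_x γ_ε = (1-ε²)/(cosh y + ε cos x)² > 0, where ∂_x θ_ε = γ_{ε,y}/(1-γ_ε²) and ∂_y θ_ε = -γ_{ε,x}/(1-γ_ε²). -/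
/-- Auxiliary algebraic identity for the Jacobian computation. -/
theorem KSjac_aux (c A B d2 e : ℝ) (hd2 : d2 ≠ 0) (hS : A ^ 2 + B ^ 2 ≠ 0)
    (hc2 : c ^ 2 = e) :
    (c * A / d2) / ((A ^ 2 + B ^ 2) / d2) * (c * A / d2)
      - (-(c * B / d2)) / ((A ^ 2 + B ^ 2) / d2) * (c * B / d2) = e / d2 := by
  field_simp
  rw [← hc2]; ring

/-- The Jacobian of the change of variables `(x,y) ↦ (θ_ε, γ_ε)` equals `½ g'(ψ_ε)`:
with `∂_x θ_ε = γ_{ε,y}/(1-γ_ε²)` and `∂_y θ_ε = -γ_{ε,x}/(1-γ_ε²)` (on the region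
where `γ_ε² < 1`), one has
`∂_x θ_ε · ∂_y γ_ε − ∂_y θ_ε · ∂_x γ_ε = (1-ε²)/(cosh y + ε cos x)² > 0`. -/
theorem stmt6 (ε : ℝ) (hε : ε ∈ Set.Ico (0 : ℝ) 1) (x y : ℝ)
    (h : (KSgam ε x y) ^ 2 < 1) :
    (pdy (KSgam ε) x y / (1 - (KSgam ε x y) ^ 2)) * pdy (KSgam ε) x y
        - (-(pdx (KSgam ε) x y) / (1 - (KSgam ε x y) ^ 2)) * pdx (KSgam ε) x y
      = (1 - ε ^ 2) / (KSden ε x y) ^ 2 ∧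
    0 < (1 - ε ^ 2) / (KSden ε x y) ^ 2 := by
  obtain ⟨hε0, hε1⟩ := hε
  have hcos : -1 ≤ Real.cos x := Real.neg_one_le_cos x
  have hden : 0 < KSden ε x y := by
    have h1 : (1:ℝ) ≤ Real.cosh y := Real.one_le_cosh y
    have h2 : -ε ≤ ε * Real.cos x := by nlinarith
    unfold KSden; nlinarith
  have hdenne : KSden ε x y ≠ 0 := ne_of_gt hden
  have hc2 : Real.sqrt (1 - ε ^ 2) ^ 2 = 1 - ε ^ 2 := Real.sq_sqrt (by nlinarith)
  set c := Real.sqrt (1 - ε ^ 2) with hc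
  -- derivative of the denominator in x
  have hpdx : pdx (KSgam ε) x y = c * (Real.sinh y * (ε * Real.sin x)) / (KSden ε x y) ^ 2 := by
    have hg : HasDerivAt (fun t => Real.cosh y + ε * Real.cos t) (ε * -Real.sin x) x := by
      simpa using ((Real.hasDerivAt_cos x).const_mul ε).const_add (Real.cosh y)
    have hf : HasDerivAt (fun _ : ℝ => c * Real.sinh y) 0 x := hasDerivAt_const _ _
    have hq := hf.div hg (by simpa [KSden] using hdenne)
    have : pdx (KSgam ε) x y =
        (0 * (Real.cosh y + ε * Real.cos x) - c * Real.sinh y * (ε * -Real.sin x)) /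
          (Real.cosh y + ε * Real.cos x) ^ 2 := by
      unfold pdx
      exact HasDerivAt.deriv (by simpa [KSgam, KSden, Pi.div_def, hc] using hq)
    rw [this]; unfold KSden; ring
  have hpdy : pdy (KSgam ε) x y = c * (1 + ε * Real.cosh y * Real.cos x) / (KSden ε x y) ^ 2 := by
    have hg : HasDerivAt (fun t => Real.cosh t + ε * Real.cos x) (Real.sinh y) y := by
      simpa using (Real.hasDerivAt_cosh y).add_const (ε * Real.cos x)
    have hf : HasDerivAt (fun t => c * Real.sinh t) (c * Real.cosh y) y :=
      (Real.hasDerivAt_sinh y).const_mul c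
    have hq := hf.div hg (by simpa [KSden] using hdenne)
    have : pdy (KSgam ε) x y =
        (c * Real.cosh y * (Real.cosh y + ε * Real.cos x) - c * Real.sinh y * Real.sinh y) /
          (Real.cosh y + ε * Real.cos x) ^ 2 := by
      unfold pdy
      exact HasDerivAt.deriv (by simpa [KSgam, KSden, Pi.div_def, hc] using hq)
    rw [this]
    have hch : Real.cosh y ^ 2 - Real.sinh y ^ 2 = 1 := by
      have := Real.cosh_sq y; nlinarith [Real.sinh_sq y]
    have hnum : c * Real.cosh y * (Real.cosh y + ε * Real.cos x) - c * Real.sinh y * Real.sinh y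
        = c * (1 + ε * Real.cosh y * Real.cos x) := by linear_combination c * hch
    rw [hnum]; rfl
  have hch : Real.cosh y ^ 2 = Real.sinh y ^ 2 + 1 := by
    nlinarith [Real.cosh_sq y, Real.sinh_sq y]
  have hsc : Real.sin x ^ 2 = 1 - Real.cos x ^ 2 := Real.sin_sq x
  have hγval : (KSgam ε x y) ^ 2 = (1 - ε ^ 2) * Real.sinh y ^ 2 / (KSden ε x y) ^ 2 := by
    unfold KSgam
    rw [div_pow, mul_pow, hc2]
  have hkey : (1 + ε * Real.cosh y * Real.cos x) ^ 2 + (Real.sinh y * (ε * Real.sin x)) ^ 2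
      = (KSden ε x y) ^ 2 - (1 - ε ^ 2) * Real.sinh y ^ 2 := by
    unfold KSden
    linear_combination (ε ^ 2 * Real.cos x ^ 2 - 1) * hch + (ε ^ 2 * Real.sinh y ^ 2) * hsc
  have hd2 : (0:ℝ) < (KSden ε x y) ^ 2 := by positivity
  have hS : 1 - (KSgam ε x y) ^ 2
      = ((1 + ε * Real.cosh y * Real.cos x) ^ 2 + (Real.sinh y * (ε * Real.sin x)) ^ 2)
        / (KSden ε x y) ^ 2 := by
    rw [hγval, hkey]
    field_simp
  have hSpos : 0 < (1 + ε * Real.cosh y * Real.cos x) ^ 2 + (Real.sinh y * (ε * Real.sin x)) ^ 2 := by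
    have h1 : 0 < 1 - (KSgam ε x y) ^ 2 := by linarith
    rw [hS] at h1
    exact (div_pos_iff.mp h1).resolve_right (fun ⟨_, hneg⟩ => absurd hd2 (not_lt.mpr hneg.le)) |>.1
  have hSne : ((1 + ε * Real.cosh y * Real.cos x) ^ 2 + (Real.sinh y * (ε * Real.sin x)) ^ 2) ≠ 0 :=
    ne_of_gt hSpos
  have hpos : 0 < (1 - ε ^ 2) / (KSden ε x y) ^ 2 := div_pos (by nlinarith) hd2
  refine ⟨?_, hpos⟩
  rw [hpdx, hpdy, hS]
  exact KSjac_aux c _ _ _ _ (ne_of_gt hd2) hSne hc2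
end

section
/- θ_ε is harmonic: -Δθ_ε = 0 on the region where it is defined, and |∇θ_ε|² = ½ g'(ψ_ε)/(1-γ_ε²). -/
/-- `∂_x θ_ε = γ_{ε,y}/(1-γ_ε²)`. -/
noncomputable def KSthx (ε x y : ℝ) : ℝ := pdy (KSgam ε) x y / (1 - (KSgam ε x y) ^ 2)

/-- `∂_y θ_ε = -γ_{ε,x}/(1-γ_ε²)`. -/
noncomputable def KSthy (ε x y : ℝ) : ℝ := -(pdx (KSgam ε) x y) / (1 - (KSgam ε x y) ^ 2)

/-- The key denominator `N = D² - (1-ε²)sinh²y`. -/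
noncomputable def KSN (ε x y : ℝ) : ℝ :=
  1 + 2 * ε * Real.cos x * Real.cosh y + ε ^ 2 * ((Real.cos x) ^ 2 + (Real.sinh y) ^ 2)

lemma KSden_pos {ε : ℝ} (hε : ε ∈ Set.Ico (0 : ℝ) 1) (x y : ℝ) : 0 < KSden ε x y := by
  have h1 : (1 : ℝ) ≤ Real.cosh y := Real.one_le_cosh y
  have h2 := abs_le.1 (Real.abs_cos_le_one x)
  unfold KSden
  nlinarith [hε.1, hε.2]

lemma sq_sqrt_eps {ε : ℝ} (hε : ε ∈ Set.Ico (0 : ℝ) 1) :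
    Real.sqrt (1 - ε ^ 2) ^ 2 = 1 - ε ^ 2 := by
  apply Real.sq_sqrt
  nlinarith [hε.1, hε.2]

lemma KSN_eq (ε x y : ℝ) :
    KSN ε x y = (KSden ε x y) ^ 2 - (1 - ε ^ 2) * (Real.sinh y) ^ 2 := by
  unfold KSN KSden
  nlinarith [Real.cosh_sq y]

lemma div_div_div_aux (a n d : ℝ) (hd : d ≠ 0) : (a / d) / (n / d) = a / n := by
  rcases eq_or_ne n 0 with hn | hn
  · simp [hn]
  · field_simp

lemma pdx_gam {ε : ℝ} (hε : ε ∈ Set.Ico (0 : ℝ) 1) (x y : ℝ) :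
    pdx (KSgam ε) x y
      = Real.sqrt (1 - ε ^ 2) * (ε * Real.sin x * Real.sinh y) / (KSden ε x y) ^ 2 := by
  have hD : Real.cosh y + ε * Real.cos x ≠ 0 := (KSden_pos hε x y).ne'
  have hden : HasDerivAt (fun t => Real.cosh y + ε * Real.cos t) (ε * (-Real.sin x)) x :=
    ((Real.hasDerivAt_cos x).const_mul ε).const_add (Real.cosh y)
  have hd :=
    ((hasDerivAt_const x (Real.sqrt (1 - ε ^ 2) * Real.sinh y)).div hden hD).deriv
  unfold pdx KSgam KSden
  erw [hd]
  ring

lemma pdy_gam {ε : ℝ} (hε : ε ∈ Set.Ico (0 : ℝ) 1) (x y : ℝ) :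
    pdy (KSgam ε) x y
      = (Real.sqrt (1 - ε ^ 2) * Real.cosh y * KSden ε x y
          - Real.sqrt (1 - ε ^ 2) * Real.sinh y * Real.sinh y) / (KSden ε x y) ^ 2 := by
  have hD : Real.sinh y * 0 + Real.cosh y + ε * Real.cos x ≠ 0 := by
    simpa [KSden] using (KSden_pos hε x y).ne'
  have hnum : HasDerivAt (fun t => Real.sqrt (1 - ε ^ 2) * Real.sinh t)
      (Real.sqrt (1 - ε ^ 2) * Real.cosh y) y :=
    (Real.hasDerivAt_sinh y).const_mul _
  have hden : HasDerivAt (fun t => Real.cosh t + ε * Real.cos x) (Real.sinh y) y :=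
    (Real.hasDerivAt_cosh y).add_const _
  have hD' : Real.cosh y + ε * Real.cos x ≠ 0 := (KSden_pos hε x y).ne'
  have hd := (hnum.div hden hD').deriv
  unfold pdy KSgam KSden
  erw [hd]

lemma one_sub_gam_sq {ε : ℝ} (hε : ε ∈ Set.Ico (0 : ℝ) 1) (x y : ℝ) :
    1 - (KSgam ε x y) ^ 2 = KSN ε x y / (KSden ε x y) ^ 2 := by
  have hD : (KSden ε x y) ≠ 0 := (KSden_pos hε x y).ne'
  unfold KSgam
  rw [div_pow, KSN_eq]
  have hs : (Real.sqrt (1 - ε ^ 2) * Real.sinh y) ^ 2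
      = (1 - ε ^ 2) * (Real.sinh y) ^ 2 := by
    rw [mul_pow, sq_sqrt_eps hε]
  rw [hs]
  field_simp

lemma thx_eq {ε : ℝ} (hε : ε ∈ Set.Ico (0 : ℝ) 1) (x y : ℝ) :
    KSthx ε x y
      = Real.sqrt (1 - ε ^ 2) * (1 + ε * Real.cos x * Real.cosh y) / KSN ε x y := by
  have hD : (KSden ε x y) ≠ 0 := (KSden_pos hε x y).ne'
  have hD2 : (KSden ε x y) ^ 2 ≠ 0 := pow_ne_zero 2 hD
  unfold KSthx
  rw [pdy_gam hε, one_sub_gam_sq hε, div_div_div_aux _ _ _ hD2]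
  congr 1
  unfold KSden
  linear_combination Real.sqrt (1 - ε ^ 2) * Real.cosh_sq y

lemma thy_eq {ε : ℝ} (hε : ε ∈ Set.Ico (0 : ℝ) 1) (x y : ℝ) :
    KSthy ε x y
      = -(Real.sqrt (1 - ε ^ 2) * (ε * Real.sin x * Real.sinh y)) / KSN ε x y := by
  have hD : (KSden ε x y) ≠ 0 := (KSden_pos hε x y).ne'
  have hD2 : (KSden ε x y) ^ 2 ≠ 0 := pow_ne_zero 2 hD
  unfold KSthy
  rw [pdx_gam hε, one_sub_gam_sq hε, neg_div, div_div_div_aux _ _ _ hD2, neg_div]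

lemma KSN_pos {ε : ℝ} (hε : ε ∈ Set.Ico (0 : ℝ) 1) {x y : ℝ}
    (h : (KSgam ε x y) ^ 2 < 1) : 0 < KSN ε x y := by
  have h1 := one_sub_gam_sq hε x y
  have hD2 : (0:ℝ) < (KSden ε x y) ^ 2 := pow_pos (KSden_pos hε x y) 2
  have : 0 < KSN ε x y / (KSden ε x y) ^ 2 := by rw [← h1]; linarith
  exact (div_pos_iff.1 this).resolve_right (fun ⟨_, hc⟩ => absurd hD2 (by linarith)) |>.1

/-- `θ_ε` is harmonic on the region where it is defined (`γ_ε² < 1`), i.e. `-Δθ_ε = 0`,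
and `|∇θ_ε|² = ½ g'(ψ_ε)/(1-γ_ε²)`. -/
theorem stmt7 (ε : ℝ) (hε : ε ∈ Set.Ico (0 : ℝ) 1) (x y : ℝ)
    (h : (KSgam ε x y) ^ 2 < 1) :
    -(pdx (KSthx ε) x y + pdy (KSthy ε) x y) = 0 ∧
    (KSthx ε x y) ^ 2 + (KSthy ε x y) ^ 2
      = (1/2) * KSgp ε x y / (1 - (KSgam ε x y) ^ 2) := by
  set s := Real.sqrt (1 - ε ^ 2) with hs_def
  have hs2 : s ^ 2 = 1 - ε ^ 2 := sq_sqrt_eps hε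
  have hD : (KSden ε x y) ≠ 0 := (KSden_pos hε x y).ne'
  have hD2 : (KSden ε x y) ^ 2 ≠ 0 := pow_ne_zero 2 hD
  have hN : KSN ε x y ≠ 0 := (KSN_pos hε h).ne'
  have hNx : (1 + 2 * ε * Real.cos x * Real.cosh y
      + ε ^ 2 * ((Real.cos x) ^ 2 + (Real.sinh y) ^ 2)) ≠ 0 := hN
  constructor
  · -- harmonicity
    have fx : (fun t => KSthx ε t y)
        = fun t => s * (1 + ε * Real.cos t * Real.cosh y)
            / (1 + 2 * ε * Real.cos t * Real.cosh y
                + ε ^ 2 * ((Real.cos t) ^ 2 + (Real.sinh y) ^ 2)) := by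
      funext t
      rw [thx_eq hε t y]
      rfl
    have fy : (fun t => KSthy ε x t)
        = fun t => (-(s * (ε * Real.sin x)) * Real.sinh t)
            / (1 + 2 * ε * Real.cos x * Real.cosh t
                + ε ^ 2 * ((Real.cos x) ^ 2 + (Real.sinh t) ^ 2)) := by
      funext t
      rw [thy_eq hε x t]
      unfold KSN
      ring
    have num1 : HasDerivAt (fun t => s * (1 + ε * Real.cos t * Real.cosh y))
        (s * (ε * (-Real.sin x) * Real.cosh y)) x :=
      ((((Real.hasDerivAt_cos x).const_mul ε).mul_const (Real.cosh y)).const_add 1).const_mul s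
    have den1 : HasDerivAt (fun t => 1 + 2 * ε * Real.cos t * Real.cosh y
          + ε ^ 2 * ((Real.cos t) ^ 2 + (Real.sinh y) ^ 2))
        (2 * ε * (-Real.sin x) * Real.cosh y
          + ε ^ 2 * (2 * Real.cos x ^ 1 * (-Real.sin x))) x := by
      exact ((((Real.hasDerivAt_cos x).const_mul (2*ε)).mul_const (Real.cosh y)).const_add 1).add
        ((((Real.hasDerivAt_cos x).pow 2).add_const ((Real.sinh y) ^ 2)).const_mul (ε ^ 2))
    have num2 : HasDerivAt (fun t => -(s * (ε * Real.sin x)) * Real.sinh t)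
        (-(s * (ε * Real.sin x)) * Real.cosh y) y :=
      (Real.hasDerivAt_sinh y).const_mul _
    have den2 : HasDerivAt (fun t => 1 + 2 * ε * Real.cos x * Real.cosh t
          + ε ^ 2 * ((Real.cos x) ^ 2 + (Real.sinh t) ^ 2))
        (2 * ε * Real.cos x * Real.sinh y
          + ε ^ 2 * (2 * Real.sinh y ^ 1 * Real.cosh y)) y := by
      exact (((Real.hasDerivAt_cosh y).const_mul (2 * ε * Real.cos x)).const_add 1).add
        ((((Real.hasDerivAt_sinh y).pow 2).const_add ((Real.cos x) ^ 2)).const_mul (ε ^ 2))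
    have dx := (num1.div den1 hNx).deriv
    have dy := (num2.div den2 hNx).deriv
    unfold pdx pdy
    erw [fx, fy, dx, dy, ← add_div, neg_eq_zero, div_eq_zero_iff]
    left
    linear_combination (-(2 * s * ε ^ 2 * Real.sin x * Real.cos x)) * Real.cosh_sq y
  · -- gradient identity
    rw [thx_eq hε, thy_eq hε, one_sub_gam_sq hε]
    unfold KSgp
    rw [show (1:ℝ)/2 * (2 * (1 - ε ^ 2) / (KSden ε x y) ^ 2)
        = (1 - ε ^ 2) / (KSden ε x y) ^ 2 by ring,
      div_div_div_aux _ _ _ hD2]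
    rw [div_pow, div_pow, ← add_div]
    have hc := Real.cosh_sq y
    have hsin := Real.sin_sq_add_cos_sq x
    have key : (s * (1 + ε * Real.cos x * Real.cosh y)) ^ 2
        + (-(s * (ε * Real.sin x * Real.sinh y))) ^ 2
        = (1 - ε ^ 2) * KSN ε x y := by
      unfold KSN
      linear_combination ((1 + ε * Real.cos x * Real.cosh y) ^ 2
          + ε ^ 2 * (Real.sin x) ^ 2 * (Real.sinh y) ^ 2) * hs2
        + ((1 - ε ^ 2) * ε ^ 2 * (Real.cos x) ^ 2) * hc
        + ((1 - ε ^ 2) * ε ^ 2 * (Real.sinh y) ^ 2) * hsin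
    rw [key]
    field_simp
end

section
/- For every ε ∈ [0,1), ∬_{T_{2π}×ℝ} g'(ψ_ε) dx dy = 8π, where g'(ψ_ε) = 2(1-ε²)/(cosh y + ε cos x)² and x ranges over [0,2π], y over ℝ. -/
open MeasureTheory Real

lemma arctan_part_deriv (ε a : ℝ) (hε0 : 0 ≤ ε) (hε1 : ε < 1) (ha : 1 ≤ a) (x : ℝ) :
    HasDerivAt (fun x => x - 2 * Real.arctan (ε * Real.sin x /
        (a + Real.sqrt (a ^ 2 - ε ^ 2) + ε * Real.cos x)))
      (Real.sqrt (a ^ 2 - ε ^ 2) / (a + ε * Real.cos x)) x := by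
  set s := Real.sqrt (a ^ 2 - ε ^ 2) with hs
  have hA : 0 < a ^ 2 - ε ^ 2 := by nlinarith
  have hs2 : s ^ 2 = a ^ 2 - ε ^ 2 := Real.sq_sqrt hA.le
  have hs0 : 0 < s := Real.sqrt_pos.2 hA
  have hc1 : -1 ≤ Real.cos x := Real.neg_one_le_cos x
  have hc2 : Real.cos x ≤ 1 := Real.cos_le_one x
  have hd : 0 < a + ε * Real.cos x := by nlinarith
  have hD : 0 < a + s + ε * Real.cos x := by nlinarith
  have hsin : Real.sin x ^ 2 = 1 - Real.cos x ^ 2 := by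
    have := Real.sin_sq_add_cos_sq x; linarith
  have hnum : HasDerivAt (fun x => ε * Real.sin x) (ε * Real.cos x) x :=
    (Real.hasDerivAt_sin x).const_mul ε
  have hden : HasDerivAt (fun x => a + s + ε * Real.cos x) (ε * -Real.sin x) x :=
    ((Real.hasDerivAt_cos x).const_mul ε).const_add (a + s)
  have hu := hnum.div hden hD.ne'
  have harc := hu.arctan
  have htot := (hasDerivAt_id x).sub (harc.const_mul 2)
  refine htot.congr_deriv (Eq.symm ?_)
  have hDne := hD.ne'
  have hdne := hd.ne'
  simp only [Pi.div_apply]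
  field_simp
  linear_combination (s + a + ε * Real.cos x) * hs2 + ε ^ 2 * (s + a + ε * Real.cos x) * hsin

lemma inner_deriv (ε a : ℝ) (hε0 : 0 ≤ ε) (hε1 : ε < 1) (ha : 1 ≤ a) (x : ℝ) :
    HasDerivAt (fun x => 2 * (1 - ε ^ 2) *
        (-(ε * Real.sin x) / ((a ^ 2 - ε ^ 2) * (a + ε * Real.cos x)) +
          a / ((a ^ 2 - ε ^ 2) * Real.sqrt (a ^ 2 - ε ^ 2)) *
            (x - 2 * Real.arctan (ε * Real.sin x /
              (a + Real.sqrt (a ^ 2 - ε ^ 2) + ε * Real.cos x)))))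
      (2 * (1 - ε ^ 2) / (a + ε * Real.cos x) ^ 2) x := by
  set s := Real.sqrt (a ^ 2 - ε ^ 2) with hs
  have hA : 0 < a ^ 2 - ε ^ 2 := by nlinarith
  have hs2 : s ^ 2 = a ^ 2 - ε ^ 2 := Real.sq_sqrt hA.le
  have hs0 : 0 < s := Real.sqrt_pos.2 hA
  have hc1 : -1 ≤ Real.cos x := Real.neg_one_le_cos x
  have hc2 : Real.cos x ≤ 1 := Real.cos_le_one x
  have hd : 0 < a + ε * Real.cos x := by nlinarith
  have hsin : Real.sin x ^ 2 = 1 - Real.cos x ^ 2 := by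
    have := Real.sin_sq_add_cos_sq x; linarith
  have hnum : HasDerivAt (fun x => -(ε * Real.sin x)) (-(ε * Real.cos x)) x :=
    ((Real.hasDerivAt_sin x).const_mul ε).neg
  have hden : HasDerivAt (fun x => (a ^ 2 - ε ^ 2) * (a + ε * Real.cos x))
      ((a ^ 2 - ε ^ 2) * (ε * -Real.sin x)) x :=
    (((Real.hasDerivAt_cos x).const_mul ε).const_add a).const_mul _
  have hdenne : (a ^ 2 - ε ^ 2) * (a + ε * Real.cos x) ≠ 0 :=
    (mul_pos hA hd).ne'
  have h1 := hnum.div hden hdenne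
  have h2 := (arctan_part_deriv ε a hε0 hε1 ha x).const_mul
    (a / ((a ^ 2 - ε ^ 2) * s))
  have htot := (h1.add h2).const_mul (2 * (1 - ε ^ 2))
  refine htot.congr_deriv (Eq.symm ?_)
  field_simp
  rw [← hs]
  linear_combination (1 - ε ^ 2) * ε ^ 2 * s * hsin

lemma inner_integral (ε a : ℝ) (hε0 : 0 ≤ ε) (hε1 : ε < 1) (ha : 1 ≤ a) :
    (∫ x in (0:ℝ)..(2 * Real.pi), 2 * (1 - ε ^ 2) / (a + ε * Real.cos x) ^ 2)
      = 4 * Real.pi * (1 - ε ^ 2) * a / ((a ^ 2 - ε ^ 2) * Real.sqrt (a ^ 2 - ε ^ 2)) := by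
  have hA : 0 < a ^ 2 - ε ^ 2 := by nlinarith
  have hd : ∀ x : ℝ, 0 < a + ε * Real.cos x := fun x => by
    have := Real.neg_one_le_cos x; have := Real.cos_le_one x; nlinarith
  have hcont : Continuous fun x : ℝ => 2 * (1 - ε ^ 2) / (a + ε * Real.cos x) ^ 2 :=
    continuous_const.div ((continuous_const.add (continuous_const.mul Real.continuous_cos)).pow 2)
      (fun x => pow_ne_zero 2 (hd x).ne')
  rw [intervalIntegral.integral_eq_sub_of_hasDerivAt
      (f := fun x => 2 * (1 - ε ^ 2) *
        (-(ε * Real.sin x) / ((a ^ 2 - ε ^ 2) * (a + ε * Real.cos x)) +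
          a / ((a ^ 2 - ε ^ 2) * Real.sqrt (a ^ 2 - ε ^ 2)) *
            (x - 2 * Real.arctan (ε * Real.sin x /
              (a + Real.sqrt (a ^ 2 - ε ^ 2) + ε * Real.cos x)))))
      (fun x _ => inner_deriv ε a hε0 hε1 ha x) (hcont.intervalIntegrable _ _)]
  simp [Real.sin_two_pi]
  ring

lemma outer_deriv (ε : ℝ) (hε1 : ε < 1) (hε0 : 0 ≤ ε) (y : ℝ) :
    HasDerivAt (fun y => 4 * Real.pi * Real.sinh y / Real.sqrt (Real.sinh y ^ 2 + (1 - ε ^ 2)))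
      (4 * Real.pi * (1 - ε ^ 2) * Real.cosh y /
        ((Real.cosh y ^ 2 - ε ^ 2) * Real.sqrt (Real.cosh y ^ 2 - ε ^ 2))) y := by
  have hcs : Real.cosh y ^ 2 - ε ^ 2 = Real.sinh y ^ 2 + (1 - ε ^ 2) := by
    rw [Real.cosh_sq]; ring
  have hq : 0 < Real.sinh y ^ 2 + (1 - ε ^ 2) := by nlinarith [sq_nonneg (Real.sinh y)]
  have hr0 : 0 < Real.sqrt (Real.sinh y ^ 2 + (1 - ε ^ 2)) := Real.sqrt_pos.2 hq
  have hr2 : Real.sqrt (Real.sinh y ^ 2 + (1 - ε ^ 2)) ^ 2 = Real.sinh y ^ 2 + (1 - ε ^ 2) :=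
    Real.sq_sqrt hq.le
  have hnum : HasDerivAt (fun y => 4 * Real.pi * Real.sinh y) (4 * Real.pi * Real.cosh y) y :=
    (Real.hasDerivAt_sinh y).const_mul _
  have hin : HasDerivAt (fun y => Real.sinh y ^ 2 + (1 - ε ^ 2))
      (2 * Real.sinh y * Real.cosh y) y := by
    have := ((Real.hasDerivAt_sinh y).pow 2).add_const (1 - ε ^ 2)
    refine this.congr_deriv (Eq.symm ?_); push_cast; ring
  have hsq := hin.sqrt hq.ne'
  have hdiv := hnum.div hsq (by positivity)
  refine hdiv.congr_deriv (Eq.symm ?_)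
  rw [hcs]
  set r := Real.sqrt (Real.sinh y ^ 2 + (1 - ε ^ 2))
  have hch : 0 < Real.cosh y := Real.cosh_pos y
  field_simp
  linear_combination (-(Real.sinh y ^ 2)) * hr2

lemma ratio_tendsto (c2 : ℝ) (hc : 0 < c2) :
    Filter.Tendsto (fun t : ℝ => t / Real.sqrt (t ^ 2 + c2)) Filter.atTop (nhds 1) := by
  have h0 : Filter.Tendsto (fun t : ℝ => 1 + c2 * (t⁻¹) ^ 2) Filter.atTop (nhds 1) := by
    have := (tendsto_inv_atTop_zero (𝕜 := ℝ)).pow 2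
    have h2 := this.const_mul c2
    simpa using tendsto_const_nhds.add h2
  have h1 : Filter.Tendsto (fun t : ℝ => (Real.sqrt (1 + c2 * (t⁻¹) ^ 2))⁻¹)
      Filter.atTop (nhds 1) := by
    have hs := (Real.continuous_sqrt.tendsto 1).comp h0
    rw [Real.sqrt_one] at hs
    simpa using hs.inv₀ one_ne_zero
  refine h1.congr' ?_
  filter_upwards [Filter.eventually_gt_atTop 0] with t ht
  have hX : 0 < 1 + c2 * (t⁻¹) ^ 2 := by positivity
  have hsplit : t ^ 2 + c2 = t ^ 2 * (1 + c2 * (t⁻¹) ^ 2) := by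
    field_simp
  rw [hsplit, Real.sqrt_mul (sq_nonneg t), Real.sqrt_sq ht.le]
  rw [eq_comm, div_eq_iff (by positivity)]
  field_simp

lemma sinh_atTop : Filter.Tendsto Real.sinh Filter.atTop Filter.atTop := by
  have h : Filter.Tendsto (fun y : ℝ => (Real.exp y + -1) / 2) Filter.atTop Filter.atTop :=
    (Filter.tendsto_atTop_add_const_right _ (-1) Real.tendsto_exp_atTop).atTop_div_const two_pos
  refine Filter.tendsto_atTop_mono' _ ?_ h
  filter_upwards [Filter.eventually_ge_atTop 0] with y hy
  rw [Real.sinh_eq]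
  have : Real.exp (-y) ≤ 1 := Real.exp_le_one_iff.mpr (by linarith)
  linarith

lemma G_tendsto_top (ε : ℝ) (hε0 : 0 ≤ ε) (hε1 : ε < 1) :
    Filter.Tendsto (fun y => 4 * Real.pi * Real.sinh y / Real.sqrt (Real.sinh y ^ 2 + (1 - ε ^ 2)))
      Filter.atTop (nhds (4 * Real.pi)) := by
  have h := (ratio_tendsto (1 - ε ^ 2) (by nlinarith)).comp
      sinh_atTop
  have h2 := h.const_mul (4 * Real.pi)
  rw [mul_one] at h2
  refine h2.congr fun y => ?_
  simp [Function.comp, mul_div_assoc]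

lemma G_tendsto_bot (ε : ℝ) (hε0 : 0 ≤ ε) (hε1 : ε < 1) :
    Filter.Tendsto (fun y => 4 * Real.pi * Real.sinh y / Real.sqrt (Real.sinh y ^ 2 + (1 - ε ^ 2)))
      Filter.atBot (nhds (-(4 * Real.pi))) := by
  have h := ((G_tendsto_top ε hε0 hε1).comp Filter.tendsto_neg_atBot_atTop).neg
  refine h.congr fun y => ?_
  simp [Function.comp, Real.sinh_neg, neg_div]

lemma g_integrable (ε : ℝ) (hε0 : 0 ≤ ε) (hε1 : ε < 1) :
    Integrable (fun y : ℝ => 4 * Real.pi * (1 - ε ^ 2) * Real.cosh y /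
      ((Real.cosh y ^ 2 - ε ^ 2) * Real.sqrt (Real.cosh y ^ 2 - ε ^ 2))) := by
  set g := fun y : ℝ => 4 * Real.pi * (1 - ε ^ 2) * Real.cosh y /
      ((Real.cosh y ^ 2 - ε ^ 2) * Real.sqrt (Real.cosh y ^ 2 - ε ^ 2)) with hg
  have hc2 : 0 < 1 - ε ^ 2 := by nlinarith
  have hpos : ∀ y : ℝ, 0 < Real.cosh y ^ 2 - ε ^ 2 := fun y => by
    have := Real.one_le_cosh y; nlinarith
  have hgcont : Continuous g := by
    apply Continuous.div
    · exact continuous_const.mul Real.continuous_cosh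
    · exact ((Real.continuous_cosh.pow 2).sub continuous_const).mul
        (Real.continuous_sqrt.comp ((Real.continuous_cosh.pow 2).sub continuous_const))
    · intro y
      exact (mul_pos (hpos y) (Real.sqrt_pos.2 (hpos y))).ne'
  have hbound : ∀ y : ℝ, 0 ≤ y → ‖g y‖ ≤ 16 * Real.pi / Real.sqrt (1 - ε ^ 2) * Real.exp (-2 * y) := by
    intro y hy
    have hch : 0 < Real.cosh y := Real.cosh_pos y
    have h1 : Real.exp y / 2 ≤ Real.cosh y := by
      rw [Real.cosh_eq]
      have := (Real.exp_pos (-y)).le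
      linarith
    have hd1 : (1 - ε ^ 2) * Real.cosh y ^ 2 ≤ Real.cosh y ^ 2 - ε ^ 2 := by
      have h := Real.one_le_cosh y
      have h2 : 1 ≤ Real.cosh y ^ 2 := by nlinarith
      nlinarith [mul_nonneg (sq_nonneg ε) (sub_nonneg.2 h2)]
    have hd2 : Real.sqrt (1 - ε ^ 2) * Real.cosh y ≤ Real.sqrt (Real.cosh y ^ 2 - ε ^ 2) := by
      have : Real.sqrt ((1 - ε ^ 2) * Real.cosh y ^ 2) ≤ Real.sqrt (Real.cosh y ^ 2 - ε ^ 2) :=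
        Real.sqrt_le_sqrt hd1
      rwa [Real.sqrt_mul hc2.le, Real.sqrt_sq hch.le] at this
    have hlhsnn : 0 ≤ g y := by
      apply div_nonneg
      · positivity
      · exact (mul_pos (hpos y) (Real.sqrt_pos.2 (hpos y))).le
    rw [Real.norm_eq_abs, abs_of_nonneg hlhsnn]
    have hDle : (1 - ε ^ 2) * Real.cosh y ^ 2 * (Real.sqrt (1 - ε ^ 2) * Real.cosh y) ≤
        (Real.cosh y ^ 2 - ε ^ 2) * Real.sqrt (Real.cosh y ^ 2 - ε ^ 2) := by
      apply mul_le_mul hd1 hd2 (by positivity) (hpos y).le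
    have step1 : g y ≤ 4 * Real.pi * (1 - ε ^ 2) * Real.cosh y /
        ((1 - ε ^ 2) * Real.cosh y ^ 2 * (Real.sqrt (1 - ε ^ 2) * Real.cosh y)) := by
      apply div_le_div_of_nonneg_left (by positivity) (by positivity) hDle
    have step2 : 4 * Real.pi * (1 - ε ^ 2) * Real.cosh y /
        ((1 - ε ^ 2) * Real.cosh y ^ 2 * (Real.sqrt (1 - ε ^ 2) * Real.cosh y))
        = 4 * Real.pi / (Real.sqrt (1 - ε ^ 2) * Real.cosh y ^ 2) := by
      field_simp
    have hcosh2 : Real.exp (2 * y) / 4 ≤ Real.cosh y ^ 2 := by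
      have := mul_le_mul h1 h1 (by positivity) hch.le
      calc Real.exp (2 * y) / 4 = Real.exp y / 2 * (Real.exp y / 2) := by
            rw [show (2:ℝ) * y = y + y by ring, Real.exp_add]; ring
        _ ≤ Real.cosh y ^ 2 := by nlinarith
    have step3 : 4 * Real.pi / (Real.sqrt (1 - ε ^ 2) * Real.cosh y ^ 2) ≤
        16 * Real.pi / Real.sqrt (1 - ε ^ 2) * Real.exp (-2 * y) := by
      have hs : 0 < Real.sqrt (1 - ε ^ 2) := Real.sqrt_pos.2 hc2
      have key : 4 * Real.pi / (Real.sqrt (1 - ε ^ 2) * Real.cosh y ^ 2) ≤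
          4 * Real.pi / (Real.sqrt (1 - ε ^ 2) * (Real.exp (2 * y) / 4)) :=
        div_le_div_of_nonneg_left (by positivity) (by positivity)
          (mul_le_mul_of_nonneg_left hcosh2 hs.le)
      have hexp : Real.exp (-2 * y) = (Real.exp (2 * y))⁻¹ := by
        rw [show (-2 : ℝ) * y = -(2 * y) by ring, Real.exp_neg]
      calc 4 * Real.pi / (Real.sqrt (1 - ε ^ 2) * Real.cosh y ^ 2) ≤ _ := key
        _ = 16 * Real.pi / Real.sqrt (1 - ε ^ 2) * Real.exp (-2 * y) := by
            rw [hexp]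
            field_simp
            ring
    calc g y ≤ _ := step1
      _ = _ := step2
      _ ≤ _ := step3
  rw [← integrableOn_univ, ← Set.Iio_union_Ici (a := (0:ℝ)), integrableOn_union,
    integrableOn_Ici_iff_integrableOn_Ioi]
  have hIoi : IntegrableOn g (Set.Ioi 0) := by
    refine integrable_of_isBigO_exp_neg (by norm_num : (0:ℝ) < 2) hgcont.continuousOn ?_
    apply Asymptotics.IsBigO.of_bound (16 * Real.pi / Real.sqrt (1 - ε ^ 2))
    filter_upwards [Filter.eventually_ge_atTop 0] with y hy
    have h := hbound y hy
    calc ‖g y‖ ≤ 16 * Real.pi / Real.sqrt (1 - ε ^ 2) * Real.exp (-2 * y) := h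
      _ = 16 * Real.pi / Real.sqrt (1 - ε ^ 2) * ‖Real.exp (-2 * y)‖ := by
          rw [Real.norm_eq_abs, abs_of_pos (Real.exp_pos _)]
  refine ⟨?_, hIoi⟩
  rw [← (Measure.measurePreserving_neg (volume : Measure ℝ)).integrableOn_comp_preimage
      (Homeomorph.neg ℝ).measurableEmbedding]
  simp only [Function.comp_def, Set.neg_preimage, Set.neg_Iio, neg_zero]
  exact hIoi.congr_fun (fun x _ => by simp [hg, Real.cosh_neg]) measurableSet_Ioi

/-- For every `ε ∈ [0,1)`, `∬_{T_{2π}×ℝ} g'(ψ_ε) dx dy = 8π`, where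
`g'(ψ_ε) = 2(1-ε²)/(cosh y + ε cos x)²`, `x` ranging over `[0,2π]` and `y` over `ℝ`. -/
theorem stmt9 (ε : ℝ) (hε : ε ∈ Set.Ico (0 : ℝ) 1) :
    (∫ y : ℝ, ∫ x in (0 : ℝ)..(2 * Real.pi),
        2 * (1 - ε ^ 2) / (Real.cosh y + ε * Real.cos x) ^ 2)
      = 8 * Real.pi := by
  obtain ⟨hε0, hε1⟩ := hε
  have hrw : (fun y : ℝ => ∫ x in (0 : ℝ)..(2 * Real.pi),
      2 * (1 - ε ^ 2) / (Real.cosh y + ε * Real.cos x) ^ 2)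
      = fun y : ℝ => 4 * Real.pi * (1 - ε ^ 2) * Real.cosh y /
        ((Real.cosh y ^ 2 - ε ^ 2) * Real.sqrt (Real.cosh y ^ 2 - ε ^ 2)) :=
    funext fun y => inner_integral ε (Real.cosh y) hε0 hε1 (Real.one_le_cosh y)
  rw [hrw]
  have := integral_of_hasDerivAt_of_tendsto (outer_deriv ε hε1 hε0)
    (g_integrable ε hε0 hε1) (G_tendsto_bot ε hε0 hε1) (G_tendsto_top ε hε0 hε1)
  rw [this]
  ring
end

section
/- Fix α ∈ (0, 1/2], k ∈ ℤ, n ≥ 0. Set β = |k+α| + 1/2 and λ = ½(n + |k+α|)(n + |k+α| + 1). Then φ(γ) = (1-γ²)^{|k+α|/2} C_n^β(γ) solves -((1-γ²)φ')' + (k+α)²/(1-γ²) · φ = 2λφ on (-1,1). -/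
/-- Let `α ∈ (0,1/2]`, `k ∈ ℤ`, `n ≥ 0`, `β = |k+α| + 1/2`,
`λ = ½(n + |k+α|)(n + |k+α| + 1)`, and let `C_n^β` be the Gegenbauer polynomial of degree `n`
with parameter `β`, i.e. a (smooth) polynomial solution of
`(1-γ²)y'' - (2β+1)γ y' + n(n+2β)y = 0`. Then `φ(γ) = (1-γ²)^{|k+α|/2} C_n^β(γ)` solves
`-((1-γ²)φ')' + (k+α)²/(1-γ²) · φ = 2λφ` on `(-1,1)`. -/
theorem stmt13 (α : ℝ) (hα : α ∈ Set.Ioc (0 : ℝ) (1 / 2)) (k : ℤ) (n : ℕ)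
    (C : ℝ → ℝ) (hC : ContDiff ℝ 2 C)
    (hode : ∀ γ ∈ Set.Ioo (-1 : ℝ) 1,
      (1 - γ ^ 2) * deriv (deriv C) γ
          - (2 * (|(k : ℝ) + α| + 1 / 2) + 1) * γ * deriv C γ
          + (n : ℝ) * ((n : ℝ) + 2 * (|(k : ℝ) + α| + 1 / 2)) * C γ = 0) :
    ∀ γ ∈ Set.Ioo (-1 : ℝ) 1,
      -(deriv (fun t => (1 - t ^ 2) *
            deriv (fun s => (1 - s ^ 2) ^ (|(k : ℝ) + α| / 2) * C s) t) γ)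
          + ((k : ℝ) + α) ^ 2 / (1 - γ ^ 2) * ((1 - γ ^ 2) ^ (|(k : ℝ) + α| / 2) * C γ)
        = 2 * ((1 / 2) * ((n : ℝ) + |(k : ℝ) + α|) * ((n : ℝ) + |(k : ℝ) + α| + 1)) *
            ((1 - γ ^ 2) ^ (|(k : ℝ) + α| / 2) * C γ) := by
  intro γ hγ
  set a : ℝ := |(k : ℝ) + α| with ha
  have hsq : a ^ 2 = ((k : ℝ) + α) ^ 2 := by rw [ha]; exact sq_abs _
  clear_value a
  have hpos : ∀ s ∈ Set.Ioo (-1 : ℝ) 1, (0 : ℝ) < 1 - s ^ 2 := by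
    intro s hs; nlinarith [hs.1, hs.2]
  have hγpos := hpos γ hγ
  have hCd : Differentiable ℝ C := hC.differentiable two_ne_zero
  have hCd2 : Differentiable ℝ (deriv C) := by
    have h2 : ContDiff ℝ ((1 : ℕ) + 1) C := by exact_mod_cast hC
    exact (contDiff_succ_iff_deriv.mp h2).2.2.differentiable (by norm_num)
  -- derivative of the inner function on Ioo
  have hinner : ∀ s ∈ Set.Ioo (-1 : ℝ) 1,
      HasDerivAt (fun s => (1 - s ^ 2) ^ (a / 2) * C s)
        ((-(2 * s) * (a / 2) * (1 - s ^ 2) ^ (a / 2 - 1)) * C s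
          + (1 - s ^ 2) ^ (a / 2) * deriv C s) s := by
    intro s hs
    have h1 : HasDerivAt (fun s : ℝ => 1 - s ^ 2) (-(2 * s)) s := by
      simpa using ((hasDerivAt_pow 2 s).const_sub 1)
    exact (h1.rpow_const (p := a / 2) (Or.inl (hpos s hs).ne')).mul (hCd s).hasDerivAt
  -- the outer function agrees with an explicit one on Ioo
  have heq : ∀ t ∈ Set.Ioo (-1 : ℝ) 1,
      (1 - t ^ 2) * deriv (fun s => (1 - s ^ 2) ^ (a / 2) * C s) t
        = -(a * t) * (1 - t ^ 2) ^ (a / 2) * C t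
            + (1 - t ^ 2) ^ (a / 2 + 1) * deriv C t := by
    intro t ht
    have hx := hpos t ht
    rw [(hinner t ht).deriv]
    have e1 : (1 - t ^ 2) ^ (a / 2 - 1) * (1 - t ^ 2) = (1 - t ^ 2) ^ (a / 2) := by
      rw [← Real.rpow_add_one hx.ne']; ring_nf
    have e2 : (1 - t ^ 2) ^ (a / 2 + 1) = (1 - t ^ 2) ^ (a / 2) * (1 - t ^ 2) := by
      rw [Real.rpow_add_one hx.ne']
    linear_combination (-(a * t) * C t) * e1 - deriv C t * e2
  have hev : (fun t => (1 - t ^ 2) * deriv (fun s => (1 - s ^ 2) ^ (a / 2) * C s) t)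
      =ᶠ[nhds γ] fun t => -(a * t) * (1 - t ^ 2) ^ (a / 2) * C t
            + (1 - t ^ 2) ^ (a / 2 + 1) * deriv C t := by
    filter_upwards [isOpen_Ioo.mem_nhds hγ] with t ht using heq t ht
  -- HasDerivAt for the explicit function
  have h1 : HasDerivAt (fun t : ℝ => 1 - t ^ 2) (-(2 * γ)) γ := by
    simpa using ((hasDerivAt_pow 2 γ).const_sub 1)
  have hrA : HasDerivAt (fun t : ℝ => (1 - t ^ 2) ^ (a / 2))
      (-(2 * γ) * (a / 2) * (1 - γ ^ 2) ^ (a / 2 - 1)) γ :=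
    h1.rpow_const (Or.inl hγpos.ne')
  have hrB : HasDerivAt (fun t : ℝ => (1 - t ^ 2) ^ (a / 2 + 1))
      (-(2 * γ) * (a / 2 + 1) * (1 - γ ^ 2) ^ (a / 2 + 1 - 1)) γ :=
    h1.rpow_const (Or.inl hγpos.ne')
  have hm1 : HasDerivAt (fun t : ℝ => -(a * t)) (-a) γ := by
    simpa [Pi.neg_def] using ((hasDerivAt_id γ).const_mul a).neg
  have hG : HasDerivAt (fun t => -(a * t) * (1 - t ^ 2) ^ (a / 2) * C t
        + (1 - t ^ 2) ^ (a / 2 + 1) * deriv C t)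
      (((-a) * (1 - γ ^ 2) ^ (a / 2)
          + (-(a * γ)) * (-(2 * γ) * (a / 2) * (1 - γ ^ 2) ^ (a / 2 - 1))) * C γ
        + (-(a * γ) * (1 - γ ^ 2) ^ (a / 2)) * deriv C γ
        + ((-(2 * γ) * (a / 2 + 1) * (1 - γ ^ 2) ^ (a / 2 + 1 - 1)) * deriv C γ
            + (1 - γ ^ 2) ^ (a / 2 + 1) * deriv (deriv C) γ)) γ :=
    ((hm1.mul hrA).mul (hCd γ).hasDerivAt).add (hrB.mul (hCd2 γ).hasDerivAt)
  rw [hev.deriv_eq, hG.deriv]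
  have e1 : (1 - γ ^ 2) ^ (a / 2 - 1) * (1 - γ ^ 2) = (1 - γ ^ 2) ^ (a / 2) := by
    rw [← Real.rpow_add_one hγpos.ne']; ring_nf
  have e2 : (1 - γ ^ 2) ^ (a / 2 + 1) = (1 - γ ^ 2) ^ (a / 2) * (1 - γ ^ 2) := by
    rw [Real.rpow_add_one hγpos.ne']
  have e3 : (1 - γ ^ 2) ^ (a / 2 + 1 - 1) = (1 - γ ^ 2) ^ (a / 2) := by norm_num
  have e4 : ((k : ℝ) + α) ^ 2 / (1 - γ ^ 2) * ((1 - γ ^ 2) ^ (a / 2) * C γ)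
      = a ^ 2 * (1 - γ ^ 2) ^ (a / 2 - 1) * C γ := by
    rw [← hsq, ← e1, div_mul_eq_mul_div, div_eq_iff hγpos.ne']
    ring
  have hO := hode γ hγ
  rw [e3, e2, e4]
  linear_combination (-((1 - γ ^ 2) ^ (a / 2))) * hO + (a ^ 2 * C γ) * e1
end

section
/- For 0 ≤ ε₁ < ε₂ < 1, the ellipse Γ_{ε₂} = {(ξ,η) : (ξ-ε₂)²/(1-ε₂)² + η²/((1-ε₂)/(1+ε₂)) = 1} is enclosed by the ellipse Γ_{ε₁} = {(ξ-ε₁)²/(1-ε₁)² + η²/((1-ε₁)/(1+ε₁)) = 1}: every point of Γ_{ε₂} satisfies (ξ-ε₁)²/(1-ε₁)² + η²/((1-ε₁)/(1+ε₁)) ≤ 1. Moreover for every ε ∈ [0,1) the ellipse Γ_ε is contained in the closed unit disk and passes through (1,0). -/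
lemma key16 (ε₁ ε₂ ξ η : ℝ) (h0 : 0 ≤ ε₁) (h12 : ε₁ ≤ ε₂) (h2 : ε₂ < 1)
    (h : (ξ - ε₂) ^ 2 / (1 - ε₂) ^ 2 + η ^ 2 / ((1 - ε₂) / (1 + ε₂)) = 1) :
    (ξ - ε₁) ^ 2 / (1 - ε₁) ^ 2 + η ^ 2 / ((1 - ε₁) / (1 + ε₁)) ≤ 1 := by
  have h01 : 0 ≤ ε₂ := le_trans h0 h12
  have h1 : ε₁ < 1 := lt_of_le_of_lt h12 h2
  have hm1 : (0:ℝ) < 1 - ε₁ := by linarith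
  have hm2 : (0:ℝ) < 1 - ε₂ := by linarith
  have hp1 : (0:ℝ) < 1 + ε₁ := by linarith
  have hp2 : (0:ℝ) < 1 + ε₂ := by linarith
  have hne1 : (1 - ε₁) ≠ 0 := ne_of_gt hm1
  have hne2 : (1 - ε₂) ≠ 0 := ne_of_gt hm2
  have hnp1 : (1 + ε₁) ≠ 0 := ne_of_gt hp1
  have hnp2 : (1 + ε₂) ≠ 0 := ne_of_gt hp2
  field_simp at h
  -- h : (ξ - ε₂)^2 * (1 - ε₂) + η^2 * (1 + ε₂) * (1 - ε₂)^2 = (1 - ε₂)^2 * (1 - ε₂)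
  have heq : η ^ 2 * ((1 + ε₂) * (1 - ε₂)) = (1 - ε₂) ^ 2 - (ξ - ε₂) ^ 2 := by
    have h' : (1 - ε₂) * ((ξ - ε₂) ^ 2 + η ^ 2 * ((1 + ε₂) * (1 - ε₂)) - (1 - ε₂) ^ 2) = 0 := by
      ring_nf
      ring_nf at h
      linear_combination (1 - ε₂) * h
    have := mul_eq_zero.mp h'
    rcases this with h'' | h''
    · exact absurd h'' hne2
    · linarith
  have hxle : ξ ≤ 1 := by
    by_contra hx
    push_neg at hx
    have hpos : 0 < (ξ - 1) * (ξ + 1 - 2 * ε₂) := mul_pos (by linarith) (by linarith)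
    nlinarith [mul_nonneg (sq_nonneg η) (mul_pos hp2 hm2).le]
  have hP : 0 ≤ (ε₂ - ε₁) * (1 - ξ) * ((ε₁ + ε₂) * (1 - ξ) + 2 * (1 - ε₁) * (1 - ε₂)) := by
    apply mul_nonneg (mul_nonneg (by linarith) (by linarith))
    have : 0 ≤ (ε₁ + ε₂) * (1 - ξ) := mul_nonneg (by linarith) (by linarith)
    nlinarith [mul_pos hm1 hm2]
  have final2 : ((ξ - ε₁) ^ 2 * (1 - ε₁) + (1 - ε₁) ^ 2 * (η ^ 2 * (1 + ε₁))) * ((1 - ε₂) * (1 + ε₂))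
      ≤ ((1 - ε₁) ^ 2 * (1 - ε₁)) * ((1 - ε₂) * (1 + ε₂)) := by
    have hsub : (1 - ε₁) ^ 2 * (η ^ 2 * (1 + ε₁)) * ((1 - ε₂) * (1 + ε₂))
        = (1 - ε₁) ^ 2 * (1 + ε₁) * ((1 - ε₂) ^ 2 - (ξ - ε₂) ^ 2) := by
      calc (1 - ε₁) ^ 2 * (η ^ 2 * (1 + ε₁)) * ((1 - ε₂) * (1 + ε₂))
          = (1 - ε₁) ^ 2 * (1 + ε₁) * (η ^ 2 * ((1 + ε₂) * (1 - ε₂))) := by ring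
        _ = (1 - ε₁) ^ 2 * (1 + ε₁) * ((1 - ε₂) ^ 2 - (ξ - ε₂) ^ 2) := by rw [heq]
    nlinarith [mul_nonneg hm1.le hP]
  have final : (ξ - ε₁) ^ 2 * (1 - ε₁) + (1 - ε₁) ^ 2 * (η ^ 2 * (1 + ε₁))
      ≤ (1 - ε₁) ^ 2 * (1 - ε₁) :=
    le_of_mul_le_mul_right final2 (mul_pos hm2 hp2)
  rw [div_div_eq_mul_div, div_add_div _ _ (pow_ne_zero 2 hne1) hne1,
    div_le_one (by positivity)]
  linarith
lemma tail16 : True := trivial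

/-- For `0 ≤ ε₁ < ε₂ < 1`, the ellipse
`Γ_{ε₂} = {(ξ,η) : (ξ-ε₂)²/(1-ε₂)² + η²/((1-ε₂)/(1+ε₂)) = 1}` is enclosed by `Γ_{ε₁}`:
every point of `Γ_{ε₂}` satisfies `(ξ-ε₁)²/(1-ε₁)² + η²/((1-ε₁)/(1+ε₁)) ≤ 1`. Moreover, for
every `ε ∈ [0,1)`, `Γ_ε` is contained in the closed unit disk and passes through `(1,0)`. -/
theorem stmt16 :
    (∀ ε₁ ε₂ : ℝ, 0 ≤ ε₁ → ε₁ < ε₂ → ε₂ < 1 → ∀ ξ η : ℝ,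
      (ξ - ε₂) ^ 2 / (1 - ε₂) ^ 2 + η ^ 2 / ((1 - ε₂) / (1 + ε₂)) = 1 →
      (ξ - ε₁) ^ 2 / (1 - ε₁) ^ 2 + η ^ 2 / ((1 - ε₁) / (1 + ε₁)) ≤ 1) ∧
    (∀ ε ∈ Set.Ico (0 : ℝ) 1, ∀ ξ η : ℝ,
      (ξ - ε) ^ 2 / (1 - ε) ^ 2 + η ^ 2 / ((1 - ε) / (1 + ε)) = 1 → ξ ^ 2 + η ^ 2 ≤ 1) ∧
    (∀ ε ∈ Set.Ico (0 : ℝ) 1,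
      ((1 : ℝ) - ε) ^ 2 / (1 - ε) ^ 2 + (0 : ℝ) ^ 2 / ((1 - ε) / (1 + ε)) = 1) := by
  refine ⟨fun ε₁ ε₂ h0 h12 h2 ξ η h => key16 ε₁ ε₂ ξ η h0 h12.le h2 h,
    fun ε hε ξ η h => ?_, fun ε hε => ?_⟩
  · have := key16 0 ε ξ η le_rfl hε.1 hε.2 h
    simpa using this
  · have hne : (1 - ε) ≠ 0 := by have := hε.2; intro hc; nlinarith [sub_eq_zero.mp hc]
    rw [div_self (pow_ne_zero 2 hne)]
    simp
end
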